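/- Let p ∈ [1,∞) and let q₁, q₂ ∈ [1,∞) satisfy 2p/(p+2) < q₁ ≤ p and p/(p+1) < q₂ < 2p/(p+2). Then there exists a constant C > 0 (depending only on p, q₁, q₂) such that for every f ∈ L^{q₁}(ℝ²) ∩ L^{q₂}(ℝ²), the convolution K∗f is (almost everywhere) well defined, belongs to L^p(ℝ²), and ‖K∗f‖_{L^p(ℝ²)} ≤ C (‖f‖_{L^{q₁}(ℝ²)} + ‖f‖_{L^{q₂}(ℝ²)}). -/

import Mathlib

noncomputable section

open MeasureTheory Real Classical

abbrev R2 : Type := EuclideanSpace ℝ (Fin 2)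

/-- The kernel `K = ∇G`, gradient of the 2d Poisson kernel `G(x) = -(1/(2π)) log |x|²`,
i.e. `K(x) = -x / (π |x|²)` for `x ≠ 0`, with `K(0) = 0`. -/
noncomputable def K (x : R2) : R2 := if x = 0 then 0 else (-(π * ‖x‖ ^ 2)⁻¹) • x

/-- The 2d heat kernel `p_t(x) = (4πt)⁻¹ exp(-|x|²/(4t))`. -/
noncomputable def heatKernel (t : ℝ) (x : R2) : ℝ :=
  (4 * π * t)⁻¹ * Real.exp (-‖x‖ ^ 2 / (4 * t))

/-- The convolution `K ∗ f` (vector valued). -/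
noncomputable def Kconv (f : R2 → ℝ) (x : R2) : R2 := ∫ y : R2, f y • K (x - y)

/-- The heat semigroup `e^{tΔ} f = p_t ∗ f`. -/
noncomputable def heatConv (t : ℝ) (f : R2 → ℝ) (x : R2) : ℝ :=
  ∫ y : R2, heatKernel t (x - y) * f y

/-- The `L¹ ∩ H¹` norm `‖u‖_{L¹} + ‖u‖_{L²} + ‖∇u‖_{L²}`. -/
noncomputable def L1H1norm (u : R2 → ℝ) : ℝ :=
  (eLpNorm u 1 volume).toReal + (eLpNorm u 2 volume).toReal +
    (eLpNorm (gradient u) 2 volume).toReal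

/-- `u` is of class `C_b([0,T); L¹ ∩ H¹(ℝ²))`. -/
structure IsCbL1H1 (T : ℝ) (u : ℝ → R2 → ℝ) : Prop where
  integrable : ∀ t ∈ Set.Ico (0 : ℝ) T, Integrable (u t)
  memL2 : ∀ t ∈ Set.Ico (0 : ℝ) T, MemLp (u t) 2 volume
  diff : ∀ t ∈ Set.Ico (0 : ℝ) T, Differentiable ℝ (u t)
  gradL2 : ∀ t ∈ Set.Ico (0 : ℝ) T, MemLp (gradient (u t)) 2 volume
  norm_cont : ContinuousOn (fun t => L1H1norm (u t)) (Set.Ico 0 T)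
  norm_bdd : BddAbove ((fun t => L1H1norm (u t)) '' Set.Ico 0 T)

/-- The right-hand side of the mild (Duhamel) formulation, with drift nonlinearity
`F (K ∗ u_s)`:  `(p_t ∗ ρ₀)(x) - ∫₀ᵗ Σᵢ (∂ᵢ p_{t-s} ∗ (u_s · F(K∗u_s)ᵢ))(x) ds`. -/
noncomputable def mildRHS (F : R2 → R2) (ρ₀ : R2 → ℝ) (u : ℝ → R2 → ℝ) (t : ℝ) (x : R2) : ℝ :=
  heatConv t ρ₀ x -
    ∫ s in Set.Ioc (0 : ℝ) t, ∫ y : R2,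
      ∑ i : Fin 2, gradient (heatKernel (t - s)) (x - y) i * (u s y * F (Kconv (u s) y) i)

/-- `u` is a mild solution on `[0,T)` of `∂ₜρ = Δρ - ∇·(ρ F(K∗ρ))` with initial datum `ρ₀`.
Taking `F = id` gives the parabolic-elliptic Keller-Segel equation. -/
def IsMildKSF (F : R2 → R2) (T : ℝ) (ρ₀ : R2 → ℝ) (u : ℝ → R2 → ℝ) : Prop :=
  IsCbL1H1 T u ∧ ∀ t ∈ Set.Ioo (0 : ℝ) T, ∀ᵐ x : R2 ∂volume, u t x = mildRHS F ρ₀ u t x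

/-- `f` is a cut-off function at level `A`. -/
structure IsCutoff (A : ℝ) (f : ℝ → ℝ) : Prop where
  contDiff : ContDiff ℝ 2 f
  eq_id : ∀ x : ℝ, |x| ≤ A → f x = x
  bound : ∀ x : ℝ, |f x| ≤ A + 1
  deriv_bound : ∀ x : ℝ, |deriv f x| ≤ 1
  deriv2_bound : ∃ C : ℝ, ∀ x : ℝ, |deriv (deriv f) x| ≤ C

/-- The componentwise cut-off map `F_A : ℝ² → ℝ²`. -/
noncomputable def FA (f : ℝ → ℝ) (x : R2) : R2 := WithLp.toLp 2 (fun i => f (x i))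


open scoped ENNReal NNReal

lemma holder3 {α : Type*} [MeasurableSpace α] {μ : Measure α} {f g h : α → ℝ≥0∞}
    (hf : AEMeasurable f μ) (hg : AEMeasurable g μ) (hh : AEMeasurable h μ)
    {a b c : ℝ} (ha : 0 ≤ a) (hb : 0 ≤ b) (hc : 0 ≤ c) (habc : a + b + c = 1) :
    ∫⁻ x, f x ^ a * g x ^ b * h x ^ c ∂μ ≤
      (∫⁻ x, f x ∂μ) ^ a * (∫⁻ x, g x ∂μ) ^ b * (∫⁻ x, h x ∂μ) ^ c := by
  calc ∫⁻ x, f x ^ a * g x ^ b * h x ^ c ∂μ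
      = ∫⁻ x, ∏ i : Fin 3, ![f, g, h] i x ^ ![a, b, c] i ∂μ := by
        refine lintegral_congr fun x => ?_
        simp [Fin.prod_univ_three, mul_assoc]
    _ ≤ ∏ i : Fin 3, (∫⁻ x, ![f, g, h] i x ∂μ) ^ ![a, b, c] i := by
        refine ENNReal.lintegral_prod_norm_pow_le _ (fun i _ => ?_) (by
          simp [Fin.sum_univ_three]; linarith) (fun i _ => ?_)
        · fin_cases i <;> simpa
        · fin_cases i <;> simpa
    _ = _ := by simp [Fin.prod_univ_three]

lemma lint_sub_left (f : R2 → ℝ≥0∞) (x : R2) : ∫⁻ y, f (x - y) = ∫⁻ z, f z := by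
  calc ∫⁻ y, f (x - y)
      = ∫⁻ z, f z ∂(Measure.map (fun t => x - t) (volume : Measure R2)) := by
        rw [show (fun t : R2 => x - t) = ⇑(MeasurableEquiv.subLeft x) from rfl,
          lintegral_map_equiv]
        rfl
    _ = ∫⁻ z, f z := by rw [Measure.map_sub_left_eq_self]

lemma young_lintegral (φ ψ : R2 → ℝ≥0∞) (hφ : Measurable φ) (hψ : Measurable ψ)
    {p r q : ℝ} (hp : 1 ≤ p) (hr : 0 < r) (hq : 0 < q) (hrp : r ≤ p) (hqp : q ≤ p)
    (hpqr : 1/r + 1/q = 1 + 1/p) :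
    ∫⁻ x, (∫⁻ y, φ (x - y) * ψ y) ^ p ≤
      (∫⁻ z, φ z ^ r) ^ (p/r) * (∫⁻ z, ψ z ^ q) ^ (p/q) := by
  have hp0 : 0 < p := lt_of_lt_of_le one_pos hp
  set A := ∫⁻ z, φ z ^ r with hA
  set B := ∫⁻ z, ψ z ^ q with hB
  have he2 : 0 ≤ 1/r - 1/p := by
    have := one_div_le_one_div_of_le hr hrp
    linarith
  have he3 : 0 ≤ 1/q - 1/p := by
    have := one_div_le_one_div_of_le hq hqp
    linarith
  have hφx : ∀ x : R2, Measurable fun y => φ (x - y) :=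
    fun x => hφ.comp (measurable_const.sub measurable_id)
  have key : ∀ x : R2, (∫⁻ y, φ (x - y) * ψ y) ≤
      (∫⁻ y, φ (x - y) ^ r * ψ y ^ q) ^ (1/p) *
        (A ^ (1/r - 1/p) * B ^ (1/q - 1/p)) := by
    intro x
    have hpoint : ∀ y : R2, φ (x - y) * ψ y =
        (φ (x - y) ^ r * ψ y ^ q) ^ (1/p) *
          ((φ (x - y) ^ r) ^ (1/r - 1/p) * (ψ y ^ q) ^ (1/q - 1/p)) := by
      intro y
      rw [ENNReal.mul_rpow_of_nonneg _ _ (by positivity : (0:ℝ) ≤ 1/p), mul_mul_mul_comm,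
        ← ENNReal.rpow_add_of_nonneg _ _ (by positivity) he2,
        ← ENNReal.rpow_add_of_nonneg _ _ (by positivity) he3,
        show 1/p + (1/r - 1/p) = 1/r by ring, show 1/p + (1/q - 1/p) = 1/q by ring,
        ← ENNReal.rpow_mul, ← ENNReal.rpow_mul, mul_one_div_cancel hr.ne',
        mul_one_div_cancel hq.ne', ENNReal.rpow_one, ENNReal.rpow_one]
    calc ∫⁻ y, φ (x - y) * ψ y
        = ∫⁻ y, (φ (x - y) ^ r * ψ y ^ q) ^ (1/p) *
            ((φ (x - y) ^ r) ^ (1/r - 1/p)) * ((ψ y ^ q) ^ (1/q - 1/p)) := by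
          refine lintegral_congr fun y => ?_
          rw [hpoint y]; ring
      _ ≤ (∫⁻ y, φ (x - y) ^ r * ψ y ^ q) ^ (1/p) *
            (∫⁻ y, φ (x - y) ^ r) ^ (1/r - 1/p) * (∫⁻ y, ψ y ^ q) ^ (1/q - 1/p) := by
          refine holder3 ?_ ?_ ?_ (by positivity) he2 he3 (by linarith)
          · exact (((hφx x).pow_const r).mul (hψ.pow_const q)).aemeasurable
          · exact ((hφx x).pow_const r).aemeasurable
          · exact (hψ.pow_const q).aemeasurable
      _ = (∫⁻ y, φ (x - y) ^ r * ψ y ^ q) ^ (1/p) *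
            (A ^ (1/r - 1/p) * B ^ (1/q - 1/p)) := by
          rw [lint_sub_left (fun z => φ z ^ r) x, mul_assoc]
  have hFmeas : Measurable fun z : R2 × R2 => φ (z.1 - z.2) ^ r * ψ z.2 ^ q :=
    ((hφ.comp (measurable_fst.sub measurable_snd)).pow_const r).mul
      ((hψ.comp measurable_snd).pow_const q)
  have main : ∀ x : R2, (∫⁻ y, φ (x - y) * ψ y) ^ p ≤
      (∫⁻ y, φ (x - y) ^ r * ψ y ^ q) * (A ^ (1/r - 1/p) * B ^ (1/q - 1/p)) ^ p := by
    intro x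
    calc (∫⁻ y, φ (x - y) * ψ y) ^ p
        ≤ ((∫⁻ y, φ (x - y) ^ r * ψ y ^ q) ^ (1/p) *
            (A ^ (1/r - 1/p) * B ^ (1/q - 1/p))) ^ p :=
          ENNReal.rpow_le_rpow (key x) hp0.le
      _ = _ := by
          rw [ENNReal.mul_rpow_of_nonneg _ _ hp0.le, ← ENNReal.rpow_mul,
            one_div_mul_cancel hp0.ne', ENNReal.rpow_one]
  have swap : (∫⁻ x, ∫⁻ y, φ (x - y) ^ r * ψ y ^ q) = A * B := by
    rw [lintegral_lintegral_swap hFmeas.aemeasurable]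
    calc ∫⁻ y, ∫⁻ x, φ (x - y) ^ r * ψ y ^ q
        = ∫⁻ y, A * ψ y ^ q := by
          refine lintegral_congr fun y => ?_
          rw [lintegral_mul_const _ (by fun_prop : Measurable fun x : R2 => φ (x - y) ^ r),
            lintegral_sub_right_eq_self (fun z => φ z ^ r) y, mul_comm]
      _ = A * B := lintegral_const_mul A (hψ.pow_const q)
  calc ∫⁻ x, (∫⁻ y, φ (x - y) * ψ y) ^ p
      ≤ ∫⁻ x, (∫⁻ y, φ (x - y) ^ r * ψ y ^ q) * (A ^ (1/r - 1/p) * B ^ (1/q - 1/p)) ^ p :=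
        lintegral_mono main
    _ = (A * B) * (A ^ (1/r - 1/p) * B ^ (1/q - 1/p)) ^ p := by
        rw [lintegral_mul_const _ hFmeas.lintegral_prod_right', swap]
    _ = A ^ (p/r) * B ^ (p/q) := by
        have hab : ∀ (X : ℝ≥0∞) (t : ℝ), 0 ≤ t → X * X ^ t = X ^ (1 + t) := fun X t ht => by
          rw [ENNReal.rpow_add_of_nonneg _ _ zero_le_one ht, ENNReal.rpow_one]
        rw [ENNReal.mul_rpow_of_nonneg _ _ hp0.le, ← ENNReal.rpow_mul, ← ENNReal.rpow_mul,
          mul_mul_mul_comm, hab A _ (mul_nonneg he2 hp0.le), hab B _ (mul_nonneg he3 hp0.le),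
          show 1 + (1/r - 1/p) * p = p/r by field_simp [hr.ne', hp0.ne']; ring,
          show 1 + (1/q - 1/p) * p = p/q by field_simp [hq.ne', hp0.ne']; ring]
lemma finrank_R2 : Module.finrank ℝ R2 = 2 := by simp

lemma lint_small {r : ℝ} (hr0 : 0 < r) (hr2 : r < 2) :
    ∫⁻ x in Metric.ball (0:R2) 1, (‖x‖₊ : ℝ≥0∞) ^ (-r) < ∞ := by
  set s : ℕ → ℝ := fun n => (2:ℝ) ^ (-(n:ℝ)) with hs
  have hspos : ∀ n, 0 < s n := fun n => rpow_pos_of_pos two_pos _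
  set Cn : ℕ → Set R2 := fun n =>
    Metric.closedBall (0:R2) (s n) \ Metric.closedBall 0 (s (n+1)) with hCn
  have hcover : Metric.ball (0:R2) 1 ⊆ {0} ∪ ⋃ n : ℕ, Cn n := by
    intro x hx
    rcases eq_or_ne x 0 with rfl | hx0
    · exact Or.inl rfl
    · right
      have hxn : 0 < ‖x‖ := norm_pos_iff.mpr hx0
      have hx1 : ‖x‖ < 1 := by simpa [mem_ball_zero_iff] using hx
      have hex : ∃ n : ℕ, s (n+1) < ‖x‖ := by
        obtain ⟨n, hn⟩ := exists_pow_lt_of_lt_one hxn (by norm_num : (2:ℝ)⁻¹ < 1)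
        refine ⟨n, lt_of_le_of_lt ?_ hn⟩
        have : s (n+1) ≤ s n := by
          apply Real.rpow_le_rpow_of_exponent_le one_le_two
          push_cast; linarith
        calc s (n+1) ≤ s n := this
          _ = (2:ℝ)⁻¹ ^ n := by
              rw [hs, ← Real.rpow_natCast (2:ℝ)⁻¹ n, ← Real.rpow_neg_one (2:ℝ),
                ← Real.rpow_mul (by norm_num)]
              norm_num
      obtain ⟨n, h1, hmin⟩ : ∃ n, s (n+1) < ‖x‖ ∧ ∀ k, k < n → ¬ s (k+1) < ‖x‖ :=
        ⟨Nat.find hex, Nat.find_spec hex, fun k hk => Nat.find_min hex hk⟩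
      have h2 : ‖x‖ ≤ s n := by
        match n, h1, hmin with
        | 0, h1, _ =>
          have hs0 : s 0 = 1 := by simp [hs]
          rw [hs0]; exact hx1.le
        | (m+1), h1, hmin =>
          have := hmin m (Nat.lt_succ_self m)
          push_neg at this
          exact this
      exact Set.mem_iUnion.mpr ⟨n, by
        simp only [Cn, Set.mem_diff, Metric.mem_closedBall, dist_zero_right, not_le]
        exact ⟨h2, h1⟩⟩
  set V : ℝ≥0∞ := volume (Metric.ball (0:R2) 1) with hV
  have hVfin : V < ∞ := measure_ball_lt_top
  have hbound : ∀ n : ℕ, ∫⁻ x in Cn n, (‖x‖₊ : ℝ≥0∞) ^ (-r)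
      ≤ (ENNReal.ofReal (2 ^ r) * V) * (ENNReal.ofReal (2 ^ (r - 2))) ^ n := by
    intro n
    have hstep : ∫⁻ x in Cn n, (‖x‖₊ : ℝ≥0∞) ^ (-r)
        ≤ ENNReal.ofReal ((s (n+1)) ^ (-r)) * volume (Cn n) := by
      rw [← setLIntegral_const]
      refine setLIntegral_mono measurable_const fun x hx => ?_
      have hxl : s (n+1) < ‖x‖ := by
        have := hx.2
        simpa [Metric.mem_closedBall, dist_zero_right, not_le] using this
      have hxpos : 0 < ‖x‖ := (hspos (n+1)).trans hxl
      rw [← ENNReal.ofReal_coe_nnreal, coe_nnnorm, ENNReal.ofReal_rpow_of_pos hxpos]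
      exact ENNReal.ofReal_le_ofReal
        (Real.rpow_le_rpow_of_nonpos (hspos (n+1)) hxl.le (by linarith))
    have hvol : volume (Cn n) ≤ ENNReal.ofReal ((s n) ^ 2) * V := by
      calc volume (Cn n) ≤ volume (Metric.closedBall (0:R2) (s n)) :=
            measure_mono Set.diff_subset
        _ = ENNReal.ofReal ((s n) ^ (2:ℕ)) * V := by
            rw [Measure.addHaar_closedBall _ _ (hspos n).le, finrank_R2]
    refine hstep.trans ?_
    calc ENNReal.ofReal ((s (n+1)) ^ (-r)) * volume (Cn n)
        ≤ ENNReal.ofReal ((s (n+1)) ^ (-r)) * (ENNReal.ofReal ((s n) ^ 2) * V) :=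
          mul_le_mul_right hvol _
      _ = (ENNReal.ofReal (2 ^ r) * V) * (ENNReal.ofReal (2 ^ (r - 2))) ^ n := by
          have e1 : (s (n+1)) ^ (-r) * (s n) ^ 2 = 2 ^ r * ((2:ℝ) ^ (r-2)) ^ n := by
            simp only [hs]
            rw [← Real.rpow_natCast ((2:ℝ) ^ (-((n:ℝ)))) 2, ← Real.rpow_natCast ((2:ℝ) ^ (r-2)) n,
              ← Real.rpow_mul two_pos.le, ← Real.rpow_mul two_pos.le,
              ← Real.rpow_mul two_pos.le, ← Real.rpow_add two_pos, ← Real.rpow_add two_pos]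
            congr 1
            push_cast
            ring
          rw [← mul_assoc, ← ENNReal.ofReal_mul (Real.rpow_nonneg (hspos (n+1)).le (-r)), e1,
            ENNReal.ofReal_mul (by positivity), ← ENNReal.ofReal_pow (by positivity)]
          ring
  calc ∫⁻ x in Metric.ball (0:R2) 1, (‖x‖₊ : ℝ≥0∞) ^ (-r)
      ≤ ∫⁻ x in {0} ∪ ⋃ n : ℕ, Cn n, (‖x‖₊ : ℝ≥0∞) ^ (-r) := lintegral_mono_set hcover
    _ ≤ (∫⁻ x in ({0} : Set R2), (‖x‖₊ : ℝ≥0∞) ^ (-r)) +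
          ∫⁻ x in ⋃ n : ℕ, Cn n, (‖x‖₊ : ℝ≥0∞) ^ (-r) := lintegral_union_le _ _ _
    _ ≤ 0 + ∑' n : ℕ, ∫⁻ x in Cn n, (‖x‖₊ : ℝ≥0∞) ^ (-r) := by
        gcongr
        · exact le_of_eq (setLIntegral_measure_zero _ _ (measure_singleton 0))
        · exact lintegral_iUnion_le _ _
    _ ≤ 0 + ∑' n : ℕ, (ENNReal.ofReal (2 ^ r) * V) * (ENNReal.ofReal (2 ^ (r - 2))) ^ n := by
        gcongr with n
        exact hbound n
    _ < ∞ := by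
        rw [zero_add, ENNReal.tsum_mul_left, ENNReal.tsum_geometric]
        have hc1 : ENNReal.ofReal (2 ^ (r - 2)) < 1 := by
          rw [show (1:ℝ≥0∞) = ENNReal.ofReal 1 by simp]
          exact (ENNReal.ofReal_lt_ofReal_iff_of_nonneg (by positivity)).mpr
            (Real.rpow_lt_one_of_one_lt_of_neg one_lt_two (by linarith))
        refine ENNReal.mul_lt_top (ENNReal.mul_lt_top ENNReal.ofReal_lt_top hVfin) ?_
        exact ENNReal.inv_lt_top.mpr (tsub_pos_of_lt hc1)

lemma lint_large {r : ℝ} (hr : 2 < r) :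
    ∫⁻ x in (Metric.ball (0:R2) 1)ᶜ, (‖x‖₊ : ℝ≥0∞) ^ (-r) < ∞ := by
  have hr0 : 0 < r := by linarith
  calc ∫⁻ x in (Metric.ball (0:R2) 1)ᶜ, (‖x‖₊ : ℝ≥0∞) ^ (-r)
      ≤ ∫⁻ x in (Metric.ball (0:R2) 1)ᶜ,
          ENNReal.ofReal (2 ^ r) * ENNReal.ofReal ((1 + ‖x‖) ^ (-r)) := by
        refine setLIntegral_mono (by fun_prop) fun x hx => ?_
        have hx1 : 1 ≤ ‖x‖ := by
          simpa [Metric.mem_ball, dist_zero_right, not_lt] using hx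
        have hxpos : 0 < ‖x‖ := lt_of_lt_of_le one_pos hx1
        rw [← ENNReal.ofReal_coe_nnreal, coe_nnnorm, ENNReal.ofReal_rpow_of_pos hxpos,
          ← ENNReal.ofReal_mul (by positivity)]
        refine ENNReal.ofReal_le_ofReal ?_
        have h2x : 1 + ‖x‖ ≤ 2 * ‖x‖ := by linarith
        have hle : (2 * ‖x‖) ^ (-r) ≤ (1 + ‖x‖) ^ (-r) :=
          Real.rpow_le_rpow_of_nonpos (by positivity) h2x (by linarith)
        calc ‖x‖ ^ (-r) = 2 ^ r * (2 * ‖x‖) ^ (-r) := by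
              rw [Real.mul_rpow (by norm_num) hxpos.le, ← mul_assoc,
                ← Real.rpow_add two_pos]
              norm_num
          _ ≤ 2 ^ r * (1 + ‖x‖) ^ (-r) := by
              exact mul_le_mul_of_nonneg_left hle (by positivity)
    _ ≤ ∫⁻ x : R2, ENNReal.ofReal (2 ^ r) * ENNReal.ofReal ((1 + ‖x‖) ^ (-r)) :=
        setLIntegral_le_lintegral _ _
    _ = ENNReal.ofReal (2 ^ r) * ∫⁻ x : R2, ENNReal.ofReal ((1 + ‖x‖) ^ (-r)) :=
        lintegral_const_mul _ (by fun_prop)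
    _ < ∞ := by
        refine ENNReal.mul_lt_top ENNReal.ofReal_lt_top ?_
        exact finite_integral_one_add_norm (by rw [finrank_R2]; exact_mod_cast hr)

/-- the Young-type inequality
`‖K∗f‖_{L^p} ≤ C (‖f‖_{L^{q₁}} + ‖f‖_{L^{q₂}})` for `2p/(p+2) < q₁ ≤ p` and
`p/(p+1) < q₂ < 2p/(p+2)`. -/
theorem Kconv_young (p q₁ q₂ : ℝ) (hp : 1 ≤ p) (hq₁ : 1 ≤ q₁) (hq₂ : 1 ≤ q₂)
    (hq₁l : 2 * p / (p + 2) < q₁) (hq₁u : q₁ ≤ p)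
    (hq₂l : p / (p + 1) < q₂) (hq₂u : q₂ < 2 * p / (p + 2)) :
    ∃ C : ℝ, 0 < C ∧
      ∀ f : R2 → ℝ, MemLp f (ENNReal.ofReal q₁) volume → MemLp f (ENNReal.ofReal q₂) volume →
        (∀ᵐ x : R2 ∂volume, Integrable (fun y => f y • K (x - y))) ∧
        MemLp (Kconv f) (ENNReal.ofReal p) volume ∧
        eLpNorm (Kconv f) (ENNReal.ofReal p) volume ≤
          ENNReal.ofReal C *
            (eLpNorm f (ENNReal.ofReal q₁) volume + eLpNorm f (ENNReal.ofReal q₂) volume) := by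
  have hp0 : 0 < p := lt_of_lt_of_le one_pos hp
  have hq₁0 : 0 < q₁ := lt_of_lt_of_le one_pos hq₁
  have hq₂0 : 0 < q₂ := lt_of_lt_of_le one_pos hq₂
  -- exponent arithmetic
  set d₁ : ℝ := 1 + 1/p - 1/q₁ with hd₁def
  set d₂ : ℝ := 1 + 1/p - 1/q₂ with hd₂def
  have hq₁le1 : 1/q₁ ≤ 1 := by rw [div_le_one hq₁0]; exact hq₁
  have hq₂le1 : 1/q₂ ≤ 1 := by rw [div_le_one hq₂0]; exact hq₂
  have hd₁p : 0 < d₁ := by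
    have : 0 < 1/p := by positivity
    simp only [hd₁def]; linarith
  have hd₂p : 0 < d₂ := by
    have : 0 < 1/p := by positivity
    simp only [hd₂def]; linarith
  set r₁ : ℝ := d₁⁻¹ with hr₁def
  set r₂ : ℝ := d₂⁻¹ with hr₂def
  have hr₁0 : 0 < r₁ := inv_pos.mpr hd₁p
  have hr₂0 : 0 < r₂ := inv_pos.mpr hd₂p
  have hpqr₁ : 1/r₁ + 1/q₁ = 1 + 1/p := by
    rw [hr₁def, one_div, inv_inv, hd₁def]; ring
  have hpqr₂ : 1/r₂ + 1/q₂ = 1 + 1/p := by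
    rw [hr₂def, one_div, inv_inv, hd₂def]; ring
  have hr₁p : r₁ ≤ p := by
    have h1 : 1/p ≤ d₁ := by simp only [hd₁def]; linarith
    have := inv_anti₀ (by positivity : (0:ℝ) < 1/p) h1
    rwa [one_div, inv_inv] at this
  have hr₂p : r₂ ≤ p := by
    have h1 : 1/p ≤ d₂ := by simp only [hd₂def]; linarith
    have := inv_anti₀ (by positivity : (0:ℝ) < 1/p) h1
    rwa [one_div, inv_inv] at this
  have hhalf : (p + 2)/(2*p) = 1/2 + 1/p := by
    field_simp
  have hr₁2 : r₁ < 2 := by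
    have h1 : 1/q₁ < (p+2)/(2*p) := by
      have := one_div_lt_one_div_of_lt (by positivity : (0:ℝ) < 2*p/(p+2)) hq₁l
      rwa [one_div_div] at this
    have h2 : 1/2 < d₁ := by
      rw [hhalf] at h1
      simp only [hd₁def]; linarith
    have := one_div_lt_one_div_of_lt one_half_pos h2
    rw [one_div, one_div] at this
    norm_num at this
    rwa [hr₁def]
  have hr₂2 : 2 < r₂ := by
    have h1 : (p+2)/(2*p) < 1/q₂ := by
      have := one_div_lt_one_div_of_lt hq₂0 hq₂u
      rwa [one_div_div] at this
    have h2 : d₂ < 1/2 := by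
      rw [hhalf] at h1
      simp only [hd₂def]; linarith
    have := one_div_lt_one_div_of_lt hd₂p h2
    rw [one_div, one_div] at this
    norm_num at this
    rwa [hr₂def]
  have hq₂p : q₂ ≤ p := by
    refine le_of_lt (lt_of_lt_of_le hq₂u ?_)
    rw [div_le_iff₀ (by positivity : (0:ℝ) < p + 2)]
    nlinarith
  -- kernel measurability and bound
  have hKm : Measurable K := by
    unfold K
    refine Measurable.ite (measurableSet_eq_fun measurable_id measurable_const) measurable_const ?_
    exact (((measurable_norm.pow_const 2).const_mul π).inv.neg).smul measurable_id
  have hπ : 1 ≤ π := by linarith [Real.pi_gt_three]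
  have hKbound : ∀ z : R2, (‖K z‖₊ : ℝ≥0∞) ≤ (‖z‖₊ : ℝ≥0∞) ^ (-(1:ℝ)) := by
    intro z
    rcases eq_or_ne z 0 with rfl | hz
    · simp [K]
    · have hz0 : 0 < ‖z‖ := norm_pos_iff.mpr hz
      have hnorm : ‖K z‖ ≤ ‖z‖⁻¹ := by
        rw [K, if_neg hz, norm_smul]
        have h1 : ‖(-(π * ‖z‖ ^ 2)⁻¹)‖ = (π * ‖z‖^2)⁻¹ := by
          rw [norm_neg, Real.norm_eq_abs, abs_of_pos (by positivity)]
        rw [h1]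
        have h2 : (π * ‖z‖^2)⁻¹ * ‖z‖ = (π * ‖z‖)⁻¹ := by
          field_simp
        rw [h2]
        exact inv_anti₀ hz0 (le_mul_of_one_le_left hz0.le hπ)
      rw [← ENNReal.ofReal_coe_nnreal, ← ENNReal.ofReal_coe_nnreal, coe_nnnorm, coe_nnnorm,
        ENNReal.rpow_neg_one, ← ENNReal.ofReal_inv_of_pos hz0]
      exact ENNReal.ofReal_le_ofReal hnorm
  -- the split kernel majorants
  set Φ₁ : R2 → ℝ≥0∞ :=
    fun x => (Metric.ball (0:R2) 1).indicator (fun z => (‖z‖₊ : ℝ≥0∞) ^ (-(1:ℝ))) x with hΦ₁def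
  set Φ₂ : R2 → ℝ≥0∞ :=
    fun x => (Metric.ball (0:R2) 1)ᶜ.indicator (fun z => (‖z‖₊ : ℝ≥0∞) ^ (-(1:ℝ))) x with hΦ₂def
  have hnm : Measurable fun z : R2 => (‖z‖₊ : ℝ≥0∞) ^ (-(1:ℝ)) :=
    (measurable_nnnorm.coe_nnreal_ennreal).pow_const _
  have hΦ₁m : Measurable Φ₁ := hnm.indicator measurableSet_ball
  have hΦ₂m : Measurable Φ₂ := hnm.indicator measurableSet_ball.compl
  have hΦsum : ∀ z : R2, Φ₁ z + Φ₂ z = (‖z‖₊ : ℝ≥0∞) ^ (-(1:ℝ)) := fun z =>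
    congrFun (Set.indicator_self_add_compl (Metric.ball (0:R2) 1)
      (fun z => (‖z‖₊ : ℝ≥0∞) ^ (-(1:ℝ)))) z
  have hΦpow : ∀ (s : Set R2) (ρ : ℝ), 0 < ρ → ∀ z : R2,
      (s.indicator (fun z => (‖z‖₊ : ℝ≥0∞) ^ (-(1:ℝ))) z) ^ ρ =
        s.indicator (fun z => (‖z‖₊ : ℝ≥0∞) ^ (-ρ)) z := by
    intro s ρ hρ z
    by_cases hz : z ∈ s
    · rw [Set.indicator_of_mem hz, Set.indicator_of_mem hz, ← ENNReal.rpow_mul, neg_one_mul]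
    · rw [Set.indicator_of_notMem hz, Set.indicator_of_notMem hz,
        ENNReal.zero_rpow_of_pos hρ]
  set A₁ : ℝ≥0∞ := ∫⁻ z, Φ₁ z ^ r₁ with hA₁def
  set A₂ : ℝ≥0∞ := ∫⁻ z, Φ₂ z ^ r₂ with hA₂def
  have hA₁ : A₁ < ∞ := by
    calc A₁ = ∫⁻ z in Metric.ball (0:R2) 1, (‖z‖₊ : ℝ≥0∞) ^ (-r₁) := by
          rw [hA₁def, lintegral_congr (hΦpow _ r₁ hr₁0), lintegral_indicator measurableSet_ball]
      _ < ∞ := lint_small hr₁0 hr₁2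
  have hA₂ : A₂ < ∞ := by
    calc A₂ = ∫⁻ z in (Metric.ball (0:R2) 1)ᶜ, (‖z‖₊ : ℝ≥0∞) ^ (-r₂) := by
          rw [hA₂def, lintegral_congr (hΦpow _ r₂ hr₂0),
            lintegral_indicator measurableSet_ball.compl]
      _ < ∞ := lint_large hr₂2
  set D₁ : ℝ≥0∞ := A₁ ^ (1/r₁) with hD₁def
  set D₂ : ℝ≥0∞ := A₂ ^ (1/r₂) with hD₂def
  have hD₁ : D₁ < ∞ := ENNReal.rpow_lt_top_of_nonneg (by positivity) hA₁.ne
  have hD₂ : D₂ < ∞ := ENNReal.rpow_lt_top_of_nonneg (by positivity) hA₂.ne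
  refine ⟨D₁.toReal + D₂.toReal + 1, by positivity, fun f hf₁ hf₂ => ?_⟩
  set C : ℝ := D₁.toReal + D₂.toReal + 1 with hCdef
  have hD₁C : D₁ ≤ ENNReal.ofReal C := by
    rw [← ENNReal.ofReal_toReal hD₁.ne]
    exact ENNReal.ofReal_le_ofReal (by
      have := ENNReal.toReal_nonneg (a := D₂); simp only [hCdef]; linarith)
  have hD₂C : D₂ ≤ ENNReal.ofReal C := by
    rw [← ENNReal.ofReal_toReal hD₂.ne]
    exact ENNReal.ofReal_le_ofReal (by
      have := ENNReal.toReal_nonneg (a := D₁); simp only [hCdef]; linarith)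
  -- replace f by a measurable representative g
  have hfsm := hf₁.aestronglyMeasurable
  set g : R2 → ℝ := hfsm.mk f with hgdef
  have hgm : StronglyMeasurable g := hfsm.stronglyMeasurable_mk
  have hfg : f =ᵐ[volume] g := hfsm.ae_eq_mk
  have hgmeas : Measurable g := hgm.measurable
  set ψ : R2 → ℝ≥0∞ := fun y => (‖g y‖₊ : ℝ≥0∞) with hψdef
  have hψm : Measurable ψ := measurable_nnnorm.coe_nnreal_ennreal.comp hgmeas
  set T₁ : R2 → ℝ≥0∞ := fun x => ∫⁻ y, Φ₁ (x - y) * ψ y with hT₁def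
  set T₂ : R2 → ℝ≥0∞ := fun x => ∫⁻ y, Φ₂ (x - y) * ψ y with hT₂def
  have hT₁m : Measurable T₁ :=
    Measurable.lintegral_prod_right'
      (f := fun z : R2 × R2 => Φ₁ (z.1 - z.2) * ψ z.2)
      (((hΦ₁m.comp (measurable_fst.sub measurable_snd)).mul (hψm.comp measurable_snd)))
  have hT₂m : Measurable T₂ :=
    Measurable.lintegral_prod_right'
      (f := fun z : R2 × R2 => Φ₂ (z.1 - z.2) * ψ z.2)
      (((hΦ₂m.comp (measurable_fst.sub measurable_snd)).mul (hψm.comp measurable_snd)))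
  set N₁ : ℝ≥0∞ := ∫⁻ z, ψ z ^ q₁ with hN₁def
  set N₂ : ℝ≥0∞ := ∫⁻ z, ψ z ^ q₂ with hN₂def
  have hY₁ : ∫⁻ x, T₁ x ^ p ≤ A₁ ^ (p/r₁) * N₁ ^ (p/q₁) :=
    young_lintegral Φ₁ ψ hΦ₁m hψm hp hr₁0 hq₁0 hr₁p hq₁u hpqr₁
  have hY₂ : ∫⁻ x, T₂ x ^ p ≤ A₂ ^ (p/r₂) * N₂ ^ (p/q₂) :=
    young_lintegral Φ₂ ψ hΦ₂m hψm hp hr₂0 hq₂0 hr₂p hq₂p hpqr₂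
  -- identify eLpNorms of f
  have heLp : ∀ q : ℝ, 0 < q →
      eLpNorm f (ENNReal.ofReal q) volume = (∫⁻ z, ψ z ^ q) ^ (1/q) := by
    intro q hq0
    rw [eLpNorm_eq_lintegral_rpow_enorm_toReal (ne_of_gt (ENNReal.ofReal_pos.mpr hq0))
      ENNReal.ofReal_ne_top, ENNReal.toReal_ofReal hq0.le]
    congr 1
    refine lintegral_congr_ae (hfg.mono fun y hy => ?_)
    simp only [hψdef, hy, enorm_eq_nnnorm]
  have heLp₁ : eLpNorm f (ENNReal.ofReal q₁) volume = N₁ ^ (1/q₁) := heLp q₁ hq₁0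
  have heLp₂ : eLpNorm f (ENNReal.ofReal q₂) volume = N₂ ^ (1/q₂) := heLp q₂ hq₂0
  have hN₁ : N₁ < ∞ := by
    have h := hf₁.eLpNorm_lt_top
    rw [heLp₁] at h
    exact (ENNReal.rpow_lt_top_iff_of_pos (by positivity)).mp h
  have hN₂ : N₂ < ∞ := by
    have h := hf₂.eLpNorm_lt_top
    rw [heLp₂] at h
    exact (ENNReal.rpow_lt_top_iff_of_pos (by positivity)).mp h
  have hTfin₁ : ∫⁻ x, T₁ x ^ p < ∞ :=
    lt_of_le_of_lt hY₁ (ENNReal.mul_lt_top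
      (ENNReal.rpow_lt_top_of_nonneg (by positivity) hA₁.ne)
      (ENNReal.rpow_lt_top_of_nonneg (by positivity) hN₁.ne))
  have hTfin₂ : ∫⁻ x, T₂ x ^ p < ∞ :=
    lt_of_le_of_lt hY₂ (ENNReal.mul_lt_top
      (ENNReal.rpow_lt_top_of_nonneg (by positivity) hA₂.ne)
      (ENNReal.rpow_lt_top_of_nonneg (by positivity) hN₂.ne))
  have hT₁ae : ∀ᵐ x : R2 ∂volume, T₁ x < ∞ := by
    filter_upwards [ae_lt_top (hT₁m.pow_const p) hTfin₁.ne] with x hx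
    exact (ENNReal.rpow_lt_top_iff_of_pos hp0).mp hx
  have hT₂ae : ∀ᵐ x : R2 ∂volume, T₂ x < ∞ := by
    filter_upwards [ae_lt_top (hT₂m.pow_const p) hTfin₂.ne] with x hx
    exact (ENNReal.rpow_lt_top_iff_of_pos hp0).mp hx
  -- domination
  have hdom : ∀ x : R2, (∫⁻ y, (‖f y • K (x - y)‖₊ : ℝ≥0∞)) ≤ T₁ x + T₂ x := by
    intro x
    have h1 : (∫⁻ y, (‖f y • K (x - y)‖₊ : ℝ≥0∞)) =
        ∫⁻ y, ψ y * (‖K (x - y)‖₊ : ℝ≥0∞) := by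
      refine lintegral_congr_ae (hfg.mono fun y hy => ?_)
      simp only [hy, nnnorm_smul, ENNReal.coe_mul, hψdef]
    rw [h1]
    calc ∫⁻ y, ψ y * (‖K (x - y)‖₊ : ℝ≥0∞)
        ≤ ∫⁻ y, (Φ₁ (x - y) * ψ y + Φ₂ (x - y) * ψ y) := by
          refine lintegral_mono fun y => ?_
          have hb := hKbound (x - y)
          rw [← hΦsum (x - y)] at hb
          calc ψ y * (‖K (x - y)‖₊ : ℝ≥0∞) ≤ ψ y * (Φ₁ (x - y) + Φ₂ (x - y)) :=
                mul_le_mul_right hb _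
            _ = Φ₁ (x - y) * ψ y + Φ₂ (x - y) * ψ y := by ring
      _ = T₁ x + T₂ x := by
          rw [lintegral_add_left (by fun_prop : Measurable fun y : R2 => Φ₁ (x - y) * ψ y)]
  -- part 1 : a.e. integrability
  have hKsm : ∀ x : R2, AEStronglyMeasurable (fun y => f y • K (x - y)) volume := by
    intro x
    have hm : Measurable fun y : R2 => g y • K (x - y) :=
      hgmeas.smul (hKm.comp (measurable_const.sub measurable_id))
    exact hm.aestronglyMeasurable.congr (hfg.symm.mono fun y hy => by simp only [hy])
  have part1 : ∀ᵐ x : R2 ∂volume, Integrable (fun y => f y • K (x - y)) := by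
    filter_upwards [hT₁ae, hT₂ae] with x h1 h2
    refine ⟨hKsm x, ?_⟩
    show (∫⁻ y, (‖f y • K (x - y)‖₊ : ℝ≥0∞)) < ∞
    exact lt_of_le_of_lt (hdom x) (ENNReal.add_lt_top.mpr ⟨h1, h2⟩)
  -- strong measurability of Kconv f
  have hKconv_eq : Kconv f = Kconv g := by
    funext x
    simp only [Kconv]
    exact integral_congr_ae (hfg.mono fun y hy => by simp only [hy])
  have hKconvg : StronglyMeasurable (Kconv g) := by
    have hm : Measurable fun z : R2 × R2 => g z.2 • K (z.1 - z.2) :=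
      (hgmeas.comp measurable_snd).smul (hKm.comp (measurable_fst.sub measurable_snd))
    exact hm.stronglyMeasurable.integral_prod_right'
  have hKconvSM : AEStronglyMeasurable (Kconv f) volume := by
    rw [hKconv_eq]; exact hKconvg.aestronglyMeasurable
  -- the eLpNorm bound
  have hpne0 : (ENNReal.ofReal p) ≠ 0 := ne_of_gt (ENNReal.ofReal_pos.mpr hp0)
  have hexp : ∀ s : ℝ, 0 < s → p / s * (1/p) = 1/s := by
    intro s hs
    rw [div_mul_div_comm, mul_comm s p, mul_div_mul_left _ _ hp0.ne']
  have hterm₁ : (∫⁻ x, T₁ x ^ p) ^ (1/p) ≤ D₁ * N₁ ^ (1/q₁) := by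
    calc (∫⁻ x, T₁ x ^ p) ^ (1/p) ≤ (A₁ ^ (p/r₁) * N₁ ^ (p/q₁)) ^ (1/p) :=
          ENNReal.rpow_le_rpow hY₁ (by positivity)
      _ = D₁ * N₁ ^ (1/q₁) := by
          rw [ENNReal.mul_rpow_of_nonneg _ _ (by positivity : (0:ℝ) ≤ 1/p),
            ← ENNReal.rpow_mul, ← ENNReal.rpow_mul, hexp r₁ hr₁0, hexp q₁ hq₁0]
  have hterm₂ : (∫⁻ x, T₂ x ^ p) ^ (1/p) ≤ D₂ * N₂ ^ (1/q₂) := by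
    calc (∫⁻ x, T₂ x ^ p) ^ (1/p) ≤ (A₂ ^ (p/r₂) * N₂ ^ (p/q₂)) ^ (1/p) :=
          ENNReal.rpow_le_rpow hY₂ (by positivity)
      _ = D₂ * N₂ ^ (1/q₂) := by
          rw [ENNReal.mul_rpow_of_nonneg _ _ (by positivity : (0:ℝ) ≤ 1/p),
            ← ENNReal.rpow_mul, ← ENNReal.rpow_mul, hexp r₂ hr₂0, hexp q₂ hq₂0]
  have hKb : ∀ x : R2, (‖Kconv f x‖₊ : ℝ≥0∞) ≤ T₁ x + T₂ x := fun x =>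
    le_trans (enorm_integral_le_lintegral_enorm _) (hdom x)
  have hadd := ENNReal.lintegral_Lp_add_le (μ := volume) hT₁m.aemeasurable hT₂m.aemeasurable hp
  simp only [Pi.add_apply] at hadd
  have hmain : eLpNorm (Kconv f) (ENNReal.ofReal p) volume ≤
      D₁ * N₁ ^ (1/q₁) + D₂ * N₂ ^ (1/q₂) := by
    rw [eLpNorm_eq_lintegral_rpow_enorm_toReal hpne0 ENNReal.ofReal_ne_top,
      ENNReal.toReal_ofReal hp0.le]
    calc (∫⁻ x, (‖Kconv f x‖₊ : ℝ≥0∞) ^ p) ^ (1/p)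
        ≤ (∫⁻ x, (T₁ x + T₂ x) ^ p) ^ (1/p) := by
          refine ENNReal.rpow_le_rpow (lintegral_mono fun x => ?_) (by positivity)
          exact ENNReal.rpow_le_rpow (hKb x) hp0.le
      _ ≤ (∫⁻ x, T₁ x ^ p) ^ (1/p) + (∫⁻ x, T₂ x ^ p) ^ (1/p) := hadd
      _ ≤ D₁ * N₁ ^ (1/q₁) + D₂ * N₂ ^ (1/q₂) := add_le_add hterm₁ hterm₂
  have hfinal : eLpNorm (Kconv f) (ENNReal.ofReal p) volume ≤
      ENNReal.ofReal C *
        (eLpNorm f (ENNReal.ofReal q₁) volume + eLpNorm f (ENNReal.ofReal q₂) volume) := by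
    rw [heLp₁, heLp₂, mul_add]
    refine hmain.trans (add_le_add ?_ ?_)
    · exact mul_le_mul_left hD₁C _
    · exact mul_le_mul_left hD₂C _
  refine ⟨part1, ⟨hKconvSM, ?_⟩, hfinal⟩
  refine lt_of_le_of_lt hfinal (ENNReal.mul_lt_top ENNReal.ofReal_lt_top ?_)
  rw [heLp₁, heLp₂]
  exact ENNReal.add_lt_top.mpr
    ⟨ENNReal.rpow_lt_top_of_nonneg (by positivity) hN₁.ne,
     ENNReal.rpow_lt_top_of_nonneg (by positivity) hN₂.ne⟩


end
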